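/- For every integer m ≥ 2, (1/m) · ∑_{j=1}^{m-1} 1/(8sin⁴(jπ/m)) = (m⁴ + 10m² - 11)/(360m); in particular ∑_{j=1}^{m-1} 1/(8sin⁴(jπ/m)) = (m⁴ + 10m² - 11)/360. -/

import Mathlib

open Real Finset Complex

lemma p1c (n : ℕ) : ∑ i ∈ range n, (i:ℂ) = n*(n-1)/2 := by
  induction n with
  | zero => simp
  | succ k ih => rw [Finset.sum_range_succ, ih]; push_cast; ring

lemma p2c (n : ℕ) : ∑ i ∈ range n, (i:ℂ)^2 = n*(n-1)*(2*n-1)/6 := by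
  induction n with
  | zero => simp
  | succ k ih => rw [Finset.sum_range_succ, ih]; push_cast; ring

lemma p3c (n : ℕ) : ∑ i ∈ range n, (i:ℂ)^3 = n^2*(n-1)^2/4 := by
  induction n with
  | zero => simp
  | succ k ih => rw [Finset.sum_range_succ, ih]; push_cast; ring

lemma p4c (n : ℕ) : ∑ i ∈ range n, (i:ℂ)^4 = n*(n-1)*(2*n-1)*(3*n^2-3*n-1)/30 := by
  induction n with
  | zero => simp
  | succ k ih => rw [Finset.sum_range_succ, ih]; push_cast; ring

lemma g1 (x : ℂ) (n : ℕ) :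
    (x-1)^2 * ∑ i ∈ range n, (i:ℂ) * x^i = (n-1)*x^(n+1) - n*x^n + x := by
  induction n with
  | zero => simp
  | succ k ih => rw [Finset.sum_range_succ, mul_add, ih]; push_cast; ring

lemma g2 (x : ℂ) (n : ℕ) :
    (x-1)^3 * ∑ i ∈ range n, (i:ℂ)^2 * x^i
      = (n-1)^2*x^(n+2) - (2*n^2-2*n-1)*x^(n+1) + n^2*x^n - x^2 - x := by
  induction n with
  | zero => simp
  | succ k ih => rw [Finset.sum_range_succ, mul_add, ih]; push_cast; ring

lemma fourier_rep (m : ℕ) (hm : 2 ≤ m) (w : ℂ) (hw1 : w ≠ 1) (hwm : w^m = 1) :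
    ∑ i ∈ range m, (i:ℂ)*((m:ℂ)-i)/(2*m) * w^i = w/(w-1)^2 := by
  have hm0 : (m:ℂ) ≠ 0 := Nat.cast_ne_zero.mpr (by omega)
  have hw0 : w - 1 ≠ 0 := sub_ne_zero.mpr hw1
  have hA := g1 w m
  have hB := g2 w m
  have hp1 : w^(m+1) = w := by rw [pow_succ, hwm, one_mul]
  have hp2 : w^(m+2) = w^2 := by rw [pow_add, hwm, one_mul]
  rw [hp1, hwm] at hA
  rw [hp1, hp2, hwm] at hB
  have hS : ∑ i ∈ range m, (i:ℂ)*((m:ℂ)-i)/(2*m) * w^i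
      = ((m:ℂ) * ∑ i ∈ range m, (i:ℂ) * w^i - ∑ i ∈ range m, (i:ℂ)^2 * w^i) / (2*m) := by
    rw [Finset.mul_sum, ← Finset.sum_sub_distrib, Finset.sum_div]
    refine Finset.sum_congr rfl fun i _ => by ring
  have key2 : ((m:ℂ) * ∑ i ∈ range m, (i:ℂ) * w^i - ∑ i ∈ range m, (i:ℂ)^2 * w^i) * (w-1)^2
      = 2*m*w := by
    apply mul_right_cancel₀ hw0
    linear_combination ((m:ℂ)*(w-1)) * hA - hB
  rw [hS, div_eq_div_iff (by simpa using hm0) (pow_ne_zero 2 hw0)]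
  linear_combination key2

lemma ortho (m : ℕ) (hm : 2 ≤ m) (s : ℕ) :
    ∑ j ∈ range m, (Complex.exp (2 * π * I / m)) ^ (j * s)
      = if m ∣ s then (m:ℂ) else 0 := by
  have hprim := Complex.isPrimitiveRoot_exp m (by omega)
  have hpow : ∀ k, Complex.exp (2 * π * I / m) ^ k = 1 ↔ m ∣ k :=
    fun k => hprim.pow_eq_one_iff_dvd k
  by_cases h : m ∣ s
  · simp only [if_pos h]
    have : ∀ j, Complex.exp (2 * π * I / m) ^ (j * s) = 1 := by
      intro j
      rw [hpow]
      exact Dvd.dvd.mul_left h j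
    simp [this]
  · simp only [if_neg h]
    have hx1 : Complex.exp (2 * π * I / m) ^ s ≠ 1 := fun hc => h ((hpow s).mp hc)
    have : ∑ j ∈ range m, (Complex.exp (2 * π * I / m) ^ s) ^ j = 0 := by
      rw [geom_sum_eq hx1, ← pow_mul, mul_comm s m, pow_mul, (hpow m).mpr dvd_rfl,
        one_pow, sub_self, zero_div]
    rw [← this]
    exact Finset.sum_congr rfl fun j _ => by rw [← pow_mul, Nat.mul_comm]

lemma sin_sq_eq (m : ℕ) (hm : 2 ≤ m) (j : ℕ) :
    ((Real.sin (j * π / m) : ℂ))^2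
      = -((Complex.exp (2 * π * I / m))^j - 1)^2 / (4 * (Complex.exp (2 * π * I / m))^j) := by
  have hm0 : (m:ℂ) ≠ 0 := Nat.cast_ne_zero.mpr (by omega)
  set u : ℂ := Complex.exp ((j * π / m : ℝ) * I) with hu
  have hu0 : u ≠ 0 := Complex.exp_ne_zero _
  have hw : (Complex.exp (2 * π * I / m))^j = u^2 := by
    rw [hu, ← Complex.exp_nat_mul, sq, ← Complex.exp_add]
    congr 1
    push_cast
    field_simp
    ring
  rw [hw, Complex.ofReal_sin, Complex.sin, ← hu, neg_mul, Complex.exp_neg, ← hu]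
  have key : ((u⁻¹ - u) * I / 2) ^ 2 = -((u⁻¹ - u)^2)/4 := by
    rw [div_pow, mul_pow, Complex.I_sq]; ring
  rw [key]
  field_simp
  ring

private theorem main_sum (m : ℕ) (hm : 2 ≤ m) :
    ∑ j ∈ Finset.Ico 1 m, 1 / (8 * Real.sin (j * Real.pi / m) ^ 4)
      = ((m : ℝ) ^ 4 + 10 * (m : ℝ) ^ 2 - 11) / 360 := by
  have hm0' : m ≠ 0 := by omega
  have hm0 : (m:ℂ) ≠ 0 := Nat.cast_ne_zero.mpr hm0'
  set ζ : ℂ := Complex.exp (2 * π * I / m) with hζ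
  have hprim := Complex.isPrimitiveRoot_exp m hm0'
  have hpow : ∀ k, ζ ^ k = 1 ↔ m ∣ k := fun k => hprim.pow_eq_one_iff_dvd k
  set c : ℕ → ℂ := fun i => (i:ℂ)*((m:ℂ)-i)/(2*m) with hc
  set Y : ℕ → ℂ := fun j => ∑ i ∈ range m, c i * ζ^(j*i) with hY
  -- each term equals 2 * (Y j)^2
  have hterm : ∀ j ∈ Finset.Ico 1 m,
      ((1 / (8 * Real.sin (j * π / m) ^ 4) : ℝ) : ℂ) = 2 * (Y j)^2 := by
    intro j hj
    rw [Finset.mem_Ico] at hj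
    have hz1 : ζ^j ≠ 1 := by
      intro hcon
      have hd := (hpow j).mp hcon
      have := Nat.le_of_dvd (by omega) hd
      omega
    have hz0 : ζ^j ≠ 0 := pow_ne_zero _ (Complex.exp_ne_zero _)
    have hzm1 : ζ^j - 1 ≠ 0 := sub_ne_zero.mpr hz1
    have hwm : (ζ^j)^m = 1 := by
      rw [← pow_mul, mul_comm j m, pow_mul, (hpow m).mpr dvd_rfl, one_pow]
    have hYj : Y j = ζ^j / (ζ^j - 1)^2 := by
      have h1 : Y j = ∑ i ∈ range m, c i * (ζ^j)^i :=
        Finset.sum_congr rfl fun i _ => by rw [← pow_mul]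
      rw [h1]
      exact fourier_rep m hm (ζ^j) hz1 hwm
    have hsin := sin_sq_eq m hm j
    have hsin4 : ((Real.sin (j * π / m) : ℂ))^4 = (ζ^j - 1)^4/(16 * (ζ^j)^2) := by
      have : ((Real.sin (j * π / m) : ℂ))^4 = (((Real.sin (j * π / m) : ℂ))^2)^2 := by ring
      rw [this, hsin]
      field_simp
      ring
    push_cast at hsin4 ⊢
    rw [hsin4, hYj]
    field_simp
    ring
  -- Parseval
  have hP : ∑ j ∈ range m, (Y j)^2
      = ∑ i ∈ range m, ∑ i' ∈ range m, c i * c i' * (if m ∣ (i+i') then (m:ℂ) else 0) := by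
    have hsq : ∀ j, (Y j)^2 = ∑ i ∈ range m, ∑ i' ∈ range m, c i * c i' * ζ^(j*(i+i')) := by
      intro j
      rw [hY, sq, Finset.sum_mul_sum]
      refine Finset.sum_congr rfl fun i _ => Finset.sum_congr rfl fun i' _ => ?_
      rw [mul_add, pow_add]
      ring
    simp only [hsq]
    rw [Finset.sum_comm]
    refine Finset.sum_congr rfl fun i _ => ?_
    rw [Finset.sum_comm]
    refine Finset.sum_congr rfl fun i' _ => ?_
    rw [← Finset.mul_sum, ortho m hm (i+i')]
  -- evaluate inner sums
  have hc0 : c 0 = 0 := by simp [hc]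
  have hinner : ∀ i ∈ Finset.Ico 1 m,
      ∑ i' ∈ range m, c i * c i' * (if m ∣ (i+i') then (m:ℂ) else 0) = c i * c i * m := by
    intro i hi
    rw [Finset.mem_Ico] at hi
    rw [Finset.sum_eq_single (m - i)]
    · have hdvd : m ∣ i + (m - i) := ⟨1, by omega⟩
      rw [if_pos hdvd]
      have hcmi : c (m - i) = c i := by
        simp only [hc]
        have : ((m - i : ℕ) : ℂ) = (m:ℂ) - i := by
          push_cast [Nat.cast_sub (le_of_lt hi.2)]
          ring
        rw [this]
        ring
      rw [hcmi]
    · intro i' hi' hne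
      rw [Finset.mem_range] at hi'
      have : ¬ m ∣ i + i' := by
        intro hdvd
        obtain ⟨k, hk⟩ := hdvd
        rcases Nat.lt_or_ge k 2 with h | h
        · interval_cases k <;> omega
        · have : m * 2 ≤ m * k := Nat.mul_le_mul_left m h
          omega
      rw [if_neg this, mul_zero]
    · intro hnot
      exact absurd (Finset.mem_range.mpr (by omega)) hnot
  have hsplit : ∑ i ∈ range m, ∑ i' ∈ range m, c i * c i' * (if m ∣ (i+i') then (m:ℂ) else 0)
      = (m:ℂ) * ∑ i ∈ Finset.Ico 1 m, (c i)^2 := by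
    rw [Finset.sum_range_eq_add_Ico _ (by omega)]
    have h0 : ∑ i' ∈ range m, c 0 * c i' * (if m ∣ (0+i') then (m:ℂ) else 0) = 0 := by
      simp [hc0]
    rw [h0, zero_add, Finset.sum_congr rfl hinner, Finset.mul_sum]
    refine Finset.sum_congr rfl fun i _ => by ring
  -- Y 0
  have hY0 : Y 0 = ((m:ℂ)^2 - 1)/12 := by
    rw [hY]
    simp only [Nat.zero_mul, pow_zero, mul_one]
    have : ∑ i ∈ range m, c i = ((m:ℂ) * ∑ i ∈ range m, (i:ℂ) - ∑ i ∈ range m, (i:ℂ)^2)/(2*m) := by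
      rw [Finset.mul_sum, ← Finset.sum_sub_distrib, Finset.sum_div]
      exact Finset.sum_congr rfl fun i _ => by simp only [hc]; ring
    rw [this, p1c, p2c, div_eq_div_iff (by simpa using hm0) (by norm_num : (12:ℂ) ≠ 0)]
    ring
  -- sum of c^2
  have hcsq : ∑ i ∈ Finset.Ico 1 m, (c i)^2 = ((m:ℂ)^4 - 1)/(120*m) := by
    have : ∑ i ∈ Finset.Ico 1 m, (c i)^2 = ∑ i ∈ range m, (c i)^2 := by
      rw [Finset.sum_range_eq_add_Ico _ (by omega), hc0]
      simp
    rw [this]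
    have expand : ∑ i ∈ range m, (c i)^2
        = ((m:ℂ)^2 * ∑ i ∈ range m, (i:ℂ)^2 - 2*m*∑ i ∈ range m, (i:ℂ)^3 + ∑ i ∈ range m, (i:ℂ)^4)/(4*m^2) := by
      rw [Finset.mul_sum, Finset.mul_sum, ← Finset.sum_sub_distrib, ← Finset.sum_add_distrib, Finset.sum_div]
      exact Finset.sum_congr rfl fun i _ => by simp only [hc]; field_simp; ring
    rw [expand, p2c, p3c, p4c,
      div_eq_div_iff (mul_ne_zero (by norm_num) (pow_ne_zero _ hm0)) (mul_ne_zero (by norm_num) hm0)]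
    ring
  -- assemble over Ico
  have hIco : ∑ j ∈ Finset.Ico 1 m, (Y j)^2 = ∑ j ∈ range m, (Y j)^2 - (Y 0)^2 := by
    rw [Finset.sum_range_eq_add_Ico _ (by omega : 0 < m)]
    ring
  -- final complex computation
  have hfinal : ((∑ j ∈ Finset.Ico 1 m, 1 / (8 * Real.sin (j * π / m) ^ 4) : ℝ) : ℂ)
      = ((m:ℂ)^4 + 10*(m:ℂ)^2 - 11)/360 := by
    push_cast
    rw [Finset.sum_congr rfl (by
      intro j hj
      have := hterm j hj
      push_cast at this
      exact this)]
    have : ∑ j ∈ Finset.Ico 1 m, 2*(Y j)^2 = 2 * ∑ j ∈ Finset.Ico 1 m, (Y j)^2 := by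
      rw [Finset.mul_sum]
    have hmS : (m:ℂ) * (((m:ℂ)^4 - 1)/(120*(m:ℂ))) = ((m:ℂ)^4 - 1)/120 := by
      rw [mul_comm (120:ℂ) (m:ℂ), mul_div_assoc', mul_div_mul_left _ _ hm0]
    rw [this, hIco, hP, hsplit, hcsq, hY0, hmS]
    ring
  have := hfinal
  rw [show ((m:ℂ)^4 + 10*(m:ℂ)^2 - 11)/360 = ((((m:ℝ)^4 + 10*(m:ℝ)^2 - 11)/360 : ℝ) : ℂ) by push_cast; ring] at this
  exact_mod_cast this


/-- For every integer `m ≥ 2`,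
`(1/m) ∑_{j=1}^{m-1} 1/(8 sin⁴(jπ/m)) = (m⁴ + 10m² - 11)/(360m)`, and in
particular `∑_{j=1}^{m-1} 1/(8 sin⁴(jπ/m)) = (m⁴ + 10m² - 11)/360`. -/
theorem cone_point_degree_one (m : ℕ) (hm : 2 ≤ m) :
    (1 / (m : ℝ)) * ∑ j ∈ Finset.Ico 1 m, 1 / (8 * Real.sin (j * Real.pi / m) ^ 4)
      = ((m : ℝ) ^ 4 + 10 * (m : ℝ) ^ 2 - 11) / (360 * m) ∧
    ∑ j ∈ Finset.Ico 1 m, 1 / (8 * Real.sin (j * Real.pi / m) ^ 4)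
      = ((m : ℝ) ^ 4 + 10 * (m : ℝ) ^ 2 - 11) / 360 := by
  have h := main_sum m hm
  refine ⟨?_, h⟩
  rw [h]
  rw [one_div, inv_mul_eq_div, div_div]
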